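/- arXiv:2104.09368 — 2 statements merged into one kernel-verified Lean document; each statement's English description precedes it below -/
import Mathlib

section
/- Let β ∈ (0,1), π* > 1, R* = π*/β > 1, A > 1, and define g(π) = π/β − 1 − (R*−1)(π/π*)^(AR*/(R*−1)) on (0, π*). Then there exists π_L ∈ (0, π*) with g(π_L) = 0; that is, a second steady state of inflation below the target exists. -/
/-- Existence of a second, low-inflation steady state `π_L ∈ (0, π*)`. -/
theorem low_inflation_steady_state_exists
    (β πs A Rs : ℝ) (hβ : β ∈ Set.Ioo (0:ℝ) 1) (hπs : 1 < πs) (hA : 1 < A)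
    (hRs : Rs = πs / β) (hRs1 : 1 < Rs)
    (g : ℝ → ℝ)
    (hg : ∀ π : ℝ, g π = π / β - 1 - (Rs - 1) * (π / πs) ^ (A * Rs / (Rs - 1))) :
    ∃ πL ∈ Set.Ioo (0:ℝ) πs, g πL = 0 := by
  obtain ⟨hβ0, hβ1⟩ := hβ
  have hπ0 : (0:ℝ) < πs := lt_trans one_pos hπs
  set k : ℝ := A * Rs / (Rs - 1) with hkdef
  have hRspos : (0:ℝ) < Rs := lt_trans one_pos hRs1
  have hRsm1 : (0:ℝ) < Rs - 1 := by linarith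
  have hk : 0 < k := by
    apply div_pos _ hRsm1
    positivity
  have hπsβ : πs = Rs * β := by
    rw [hRs]; field_simp
  -- g πs = 0
  have hgπs : g πs = 0 := by
    rw [hg]
    rw [div_self (ne_of_gt hπ0), Real.one_rpow]
    rw [hπsβ]
    field_simp
    ring
  -- derivative of g at πs
  have h1 : HasDerivAt (fun π : ℝ => π / πs) (1 / πs) πs := by
    simpa using (hasDerivAt_id πs).div_const πs
  have h2 : HasDerivAt (fun π : ℝ => (π / πs) ^ k) (k / πs) πs := by
    have := h1.rpow_const (p := k) (Or.inl (by positivity))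
    simpa [div_self (ne_of_gt hπ0), Real.one_rpow, mul_comm, div_eq_mul_inv] using this
  have hdg : HasDerivAt g ((1 - A) / β) πs := by
    have h3 : HasDerivAt (fun π : ℝ => π / β - 1 - (Rs - 1) * (π / πs) ^ k)
        (1 / β - (Rs - 1) * (k / πs)) πs := by
      exact (((hasDerivAt_id πs).div_const β).sub_const 1).sub (h2.const_mul (Rs - 1))
    have heq : (1:ℝ) / β - (Rs - 1) * (k / πs) = (1 - A) / β := by
      rw [hkdef]
      have h4 : (Rs - 1) * (A * Rs / (Rs - 1) / πs) = A * Rs / πs := by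
        field_simp
      rw [h4, hπsβ]
      field_simp
      try ring
    rw [← heq]
    have : g = fun π : ℝ => π / β - 1 - (Rs - 1) * (π / πs) ^ k := funext hg
    rw [this]
    exact h3
  -- find π0 < πs with g π0 > 0
  have hslope := hasDerivAt_iff_tendsto_slope.mp hdg
  have hdneg : (1 - A) / β < 0 := div_neg_of_neg_of_pos (by linarith) hβ0
  have hslope' : Filter.Tendsto (slope g πs) (nhdsWithin πs (Set.Iio πs)) (nhds ((1 - A) / β)) :=
    hslope.mono_left (nhdsWithin_mono πs fun x hx => ne_of_lt hx)
  have hev1 : ∀ᶠ π in nhdsWithin πs (Set.Iio πs), slope g πs π < 0 :=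
    hslope'.eventually (eventually_lt_nhds hdneg)
  have hev2 : ∀ᶠ π in nhdsWithin πs (Set.Iio πs), 0 < π :=
    eventually_nhdsWithin_of_eventually_nhds (eventually_gt_nhds hπ0)
  have hev3 : ∀ᶠ π in nhdsWithin πs (Set.Iio πs), π < πs :=
    eventually_mem_nhdsWithin.mono fun x hx => hx
  obtain ⟨π0, ⟨hs0, hπ0pos⟩, hπ0lt⟩ := ((hev1.and hev2).and hev3).exists
  have hgπ0 : 0 < g π0 := by
    have heq : slope g πs π0 = (g π0 - g πs) / (π0 - πs) := slope_def_field g πs π0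
    rw [heq, hgπs, sub_zero] at hs0
    rcases div_neg_iff.mp hs0 with ⟨h, _⟩ | ⟨_, h⟩
    · exact h
    · linarith
  -- point a with g a < 0
  set a : ℝ := min (β / 2) (π0 / 2) with hadef
  have ha0 : 0 < a := lt_min (by linarith) (by linarith)
  have haπ0 : a < π0 := lt_of_le_of_lt (min_le_right _ _) (by linarith)
  have hga : g a < 0 := by
    rw [hg]
    have h1 : a / β ≤ 1 / 2 := by
      rw [div_le_div_iff₀ hβ0 (by norm_num)]
      have := min_le_left (β / 2) (π0 / 2)
      linarith
    have h2 : 0 ≤ (Rs - 1) * (a / πs) ^ k :=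
      mul_nonneg (le_of_lt hRsm1) (Real.rpow_nonneg (div_nonneg ha0.le hπ0.le) k)
    linarith
  -- continuity of g on [a, π0]
  have hcont : ContinuousOn g (Set.Icc a π0) := by
    have : g = fun π : ℝ => π / β - 1 - (Rs - 1) * (π / πs) ^ k := funext hg
    rw [this]
    apply ContinuousOn.sub
    · exact (continuousOn_id.div_const β).sub continuousOn_const
    · exact continuousOn_const.mul ((continuousOn_id.div_const πs).rpow_const
        fun x _ => Or.inr hk.le)
  have hsub := intermediate_value_Icc haπ0.le hcont
  have h0mem : (0:ℝ) ∈ Set.Icc (g a) (g π0) := ⟨hga.le, hgπ0.le⟩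
  obtain ⟨πL, hπL, hgπL⟩ := hsub h0mem
  exact ⟨πL, ⟨lt_of_lt_of_le ha0 hπL.1, lt_of_le_of_lt hπL.2 hπ0lt⟩, hgπL⟩
end

section
/- With β ∈ (0,1), π* > 1, R* = π*/β, A > 1, k = AR*/(R*−1), and f(π) = (R*−1)(π/π*)^k: if π_L ∈ (0, π*) satisfies the steady state condition π_L/β = 1 + f(π_L), then f'(π_L) < 1/β; i.e., the Taylor rule is passive at the low-inflation steady state. -/
/-- At the low-inflation steady state the Taylor rule is passive: `f'(π_L) < 1/β`. -/
theorem taylor_rule_passive_at_low_steady_state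
    (β πs A Rs k : ℝ) (hβ : β ∈ Set.Ioo (0:ℝ) 1) (hπs : 1 < πs) (hA : 1 < A)
    (hRs : Rs = πs / β) (hk : k = A * Rs / (Rs - 1))
    (f : ℝ → ℝ)
    (hf : ∀ π : ℝ, f π = (Rs - 1) * (π / πs) ^ k)
    (πL : ℝ) (hπL : πL ∈ Set.Ioo (0:ℝ) πs)
    (hss : πL / β = 1 + f πL) :
    deriv f πL < 1 / β := by
  obtain ⟨hβ0, hβ1⟩ := hβ
  obtain ⟨hπL0, hπLs⟩ := hπL
  have hπs0 : (0:ℝ) < πs := lt_trans one_pos hπs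
  have hRs1 : 1 < Rs := by
    rw [hRs]; rw [lt_div_iff₀ hβ0]; nlinarith
  have hc : (0:ℝ) < Rs - 1 := by linarith
  have hk1 : 1 < k := by
    rw [hk, lt_div_iff₀ hc]
    nlinarith
  -- set x = πL / πs ∈ (0,1)
  set x : ℝ := πL / πs with hxdef
  have hx0 : 0 < x := div_pos hπL0 hπs0
  have hx1 : x < 1 := (div_lt_one hπs0).mpr hπLs
  -- steady state: (Rs-1) * x^k = Rs * x - 1
  have hπL : πL = πs * x := by rw [hxdef, mul_div_cancel₀ _ (ne_of_gt hπs0)]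
  have hRsx : πL / β = Rs * x := by
    rw [hπL, hRs]; field_simp
  have hssx : (Rs - 1) * x ^ k = Rs * x - 1 := by
    have := hss
    rw [hf πL, hRsx] at this
    linarith
  -- Bernoulli: with s = 1/x - 1 > 0
  have hs0 : (0:ℝ) < 1 / x - 1 := by
    rw [sub_pos, lt_div_iff₀ hx0]; linarith
  have hbern : 1 + k * (1 / x - 1) < (1 / x) ^ k := by
    have := one_add_mul_self_lt_rpow_one_add (s := 1 / x - 1) (by linarith) (ne_of_gt hs0) hk1
    simpa using this
  -- multiply by x^k: x^k + k * x^(k-1) * (1 - x) < 1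
  have hxk0 : (0:ℝ) < x ^ k := Real.rpow_pos_of_pos hx0 k
  have hinv : (1 / x) ^ k * x ^ k = 1 := by
    rw [← Real.mul_rpow (by positivity) (le_of_lt hx0)]
    rw [one_div_mul_cancel (ne_of_gt hx0), Real.one_rpow]
  have hxk1 : x ^ (k - 1) = x ^ k / x := by
    rw [Real.rpow_sub hx0, Real.rpow_one]
  have key : x ^ k + k * x ^ (k - 1) * (1 - x) < 1 := by
    have h2 : (1 + k * (1 / x - 1)) * x ^ k < (1 / x) ^ k * x ^ k :=
      mul_lt_mul_of_pos_right hbern hxk0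
    rw [hinv] at h2
    have hexp : (1 + k * (1 / x - 1)) * x ^ k = x ^ k + k * x ^ (k - 1) * (1 - x) := by
      rw [hxk1]; field_simp
    linarith [hexp ▸ h2]
  -- multiply by (Rs - 1): k (Rs-1) x^(k-1) (1-x) < (Rs-1) - (Rs x - 1) = Rs (1-x)
  have key2 : k * (Rs - 1) * x ^ (k - 1) * (1 - x) < Rs * (1 - x) := by
    nlinarith [key, hssx, hc]
  have key3 : k * (Rs - 1) * x ^ (k - 1) < Rs := by
    have h1x : (0:ℝ) < 1 - x := by linarith
    exact lt_of_mul_lt_mul_right (by linarith [key2]) (le_of_lt h1x)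
  -- compute the derivative
  have hd : HasDerivAt f ((Rs - 1) * (1 / πs * k * x ^ (k - 1))) πL := by
    have h1 : HasDerivAt (fun π : ℝ => π / πs) (1 / πs) πL := by
      simpa using (hasDerivAt_id πL).div_const πs
    have h2 : HasDerivAt (fun π : ℝ => (π / πs) ^ k)
        (1 / πs * k * (πL / πs) ^ (k - 1)) πL :=
      h1.rpow_const (Or.inl (ne_of_gt hx0))
    have h3 := h2.const_mul (Rs - 1)
    rw [show f = fun y => (Rs - 1) * (y / πs) ^ k from funext hf]
    exact h3
  rw [hd.deriv]
  -- conclude: (Rs-1) * (1/πs * k * x^(k-1)) < 1/β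
  have hRsπs : Rs / πs = 1 / β := by rw [hRs]; field_simp
  calc (Rs - 1) * (1 / πs * k * x ^ (k - 1))
      = (k * (Rs - 1) * x ^ (k - 1)) / πs := by ring
    _ < Rs / πs := by gcongr
    _ = 1 / β := hRsπs
end
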